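/- Suppose d^μ_β is a semimetric. Then P^μ_β satisfies the majority principle: for every profile V = (v¹,…,vᵐ) and every candidate c ∈ [n], if the number of voters who rank c first minus the number of voters who do not rank c first is nonnegative, then c ∈ W^μ_β(V). -/
import Mathlib


open Finset

noncomputable section

/-- `i >_σ j`: candidate `i` is ranked above candidate `j` by `σ`
(where `σ i` is the candidate in position `i`). -/
def prefOver {n : ℕ} (σ : Equiv.Perm (Fin n)) (i j : Fin n) : Prop :=
  σ.symm i < σ.symm j

/-- `M(S,σ)`: the set of `>_σ`-maximal elements of `S` (a singleton when `S ≠ ∅`). -/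
def bestSet {n : ℕ} (σ : Equiv.Perm (Fin n)) (S : Finset (Fin n)) : Finset (Fin n) :=
  S.filter fun x => ∀ y ∈ S, σ.symm x ≤ σ.symm y

/-- `△_S(σ,π) = M(S,σ) △ M(S,π)`. -/
def topDiff {n : ℕ} (σ π : Equiv.Perm (Fin n)) (S : Finset (Fin n)) : Finset (Fin n) :=
  symmDiff (bestSet σ S) (bestSet π S)

/-- The `(β,μ)`-top-difference distance; `β i` is the weight of menus of size `i+2`. -/
def dTD (n : ℕ) (β : Fin (n - 1) → ℝ) (μ : Fin n → ℝ)
    (σ π : Equiv.Perm (Fin n)) : ℝ :=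
  ∑ S ∈ Finset.univ.filter (fun S : Finset (Fin n) => 2 ≤ S.card),
    (if h : S.card - 2 < n - 1 then β ⟨S.card - 2, h⟩ else 0) *
      ∑ x ∈ topDiff σ π S, μ x

def IsSemimetric {α : Type*} (d : α → α → ℝ) : Prop :=
  (∀ x y, 0 ≤ d x y) ∧ (∀ x y, d x y = d y x) ∧ (∀ x, d x x = 0) ∧
    (∀ x y z, d x z ≤ d x y + d y z)

def IsMetricFn {α : Type*} (d : α → α → ℝ) : Prop :=
  IsSemimetric d ∧ ∀ x y, d x y = 0 → x = y

/-- Cumulative distance of `σ` to a profile of voters. -/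
def dProf (n : ℕ) (β : Fin (n - 1) → ℝ) (μ : Fin n → ℝ)
    (σ : Equiv.Perm (Fin n)) (V : List (Equiv.Perm (Fin n))) : ℝ :=
  (V.map (dTD n β μ σ)).sum

/-- The median preference correspondence `P^μ_β`. -/
def Pmed (n : ℕ) (β : Fin (n - 1) → ℝ) (μ : Fin n → ℝ)
    (V : List (Equiv.Perm (Fin n))) : Set (Equiv.Perm (Fin n)) :=
  {σ | ∀ τ : Equiv.Perm (Fin n), dProf n β μ σ V ≤ dProf n β μ τ V}

/-- The winner set `W^μ_β`: candidates ranked first by some consensus ranking. -/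
def Wmed (n : ℕ) (hn : 0 < n) (β : Fin (n - 1) → ℝ) (μ : Fin n → ℝ)
    (V : List (Equiv.Perm (Fin n))) : Set (Fin n) :=
  {c | ∃ σ ∈ Pmed n β μ V, σ ⟨0, hn⟩ = c}

/-- promotion map: sends `p` to `0`, shifts everything below `p` up by one. -/
def promoteFun {n : ℕ} (p : Fin n) (j : Fin n) : Fin n :=
  if h : j.val < p.val then ⟨j.val + 1, Nat.lt_of_le_of_lt h p.isLt⟩
  else if j.val = p.val then ⟨0, Nat.lt_of_le_of_lt (Nat.zero_le _) p.isLt⟩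
  else j

lemma promoteFun_inj {n : ℕ} (p : Fin n) : Function.Injective (promoteFun p) := by
  intro a b hab
  have h := congrArg Fin.val hab
  apply Fin.ext
  unfold promoteFun at h
  split_ifs at h <;> simp_all <;> omega

lemma promoteFun_self {n : ℕ} (p : Fin n) :
    promoteFun p p = ⟨0, Nat.lt_of_le_of_lt (Nat.zero_le _) p.isLt⟩ := by
  unfold promoteFun
  simp

lemma promoteFun_le_iff {n : ℕ} (p j1 j2 : Fin n) (h1 : j1 ≠ p) (h2 : j2 ≠ p) :
    promoteFun p j1 ≤ promoteFun p j2 ↔ j1 ≤ j2 := by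
  have h1' : j1.val ≠ p.val := fun h => h1 (Fin.ext h)
  have h2' : j2.val ≠ p.val := fun h => h2 (Fin.ext h)
  unfold promoteFun
  rw [Fin.le_def, Fin.le_def]
  split_ifs <;> simp <;> omega

lemma bestSet_of_top {n : ℕ} (h0 : 0 < n) (π : Equiv.Perm (Fin n)) (c : Fin n)
    (hc : π.symm c = ⟨0, h0⟩) (S : Finset (Fin n)) (hcS : c ∈ S) :
    bestSet π S = {c} := by
  ext x
  simp only [bestSet, mem_filter, mem_singleton]
  constructor
  · rintro ⟨hxS, hall⟩
    have hx := hall c hcS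
    rw [hc] at hx
    have : π.symm x = π.symm c := by
      rw [hc]
      apply Fin.ext
      simpa using Fin.le_def.mp hx
    exact π.symm.injective this
  · rintro rfl
    refine ⟨hcS, fun y hy => ?_⟩
    rw [hc]
    exact Fin.le_def.mpr (Nat.zero_le _)

lemma bestSet_congr {n : ℕ} (σ π : Equiv.Perm (Fin n)) (S : Finset (Fin n))
    (h : ∀ x ∈ S, ∀ y ∈ S, (σ.symm x ≤ σ.symm y ↔ π.symm x ≤ π.symm y)) :
    bestSet σ S = bestSet π S := by
  ext x
  simp only [bestSet, mem_filter]
  constructor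
  · rintro ⟨hx, hall⟩
    exact ⟨hx, fun y hy => (h x hx y hy).mp (hall y hy)⟩
  · rintro ⟨hx, hall⟩
    exact ⟨hx, fun y hy => (h x hx y hy).mpr (hall y hy)⟩

theorem stmt14 (n : ℕ) (hn : 2 ≤ n) (β : Fin (n - 1) → ℝ) (μ : Fin n → ℝ)
    (hd : IsSemimetric (dTD n β μ))
    (V : List (Equiv.Perm (Fin n))) (c : Fin n)
    (hmaj :
      0 ≤ ((V.countP fun v => decide (v ⟨0, by omega⟩ = c)) : ℤ) -
        ((V.length : ℤ) - ((V.countP fun v => decide (v ⟨0, by omega⟩ = c)) : ℤ))) :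
    c ∈ Wmed n (by omega) β μ V := by
  have h0 : 0 < n := by omega
  obtain ⟨σ₀, -, hmin⟩ := Finset.exists_min_image Finset.univ
    (fun τ => dProf n β μ τ V) ⟨1, Finset.mem_univ 1⟩
  set p : Fin n := σ₀.symm c with hp
  -- the promoted ranking
  set E : Fin n ≃ Fin n :=
    Equiv.ofBijective (promoteFun p) (Finite.injective_iff_bijective.mp (promoteFun_inj p))
    with hE
  set σ' : Equiv.Perm (Fin n) := (σ₀.symm.trans E).symm with hσ'
  have hsymm : ∀ x, σ'.symm x = promoteFun p (σ₀.symm x) := by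
    intro x
    simp [hσ', hE, Equiv.ofBijective]
  have hσ'c : σ'.symm c = ⟨0, h0⟩ := by
    rw [hsymm, ← hp, promoteFun_self]
  -- bestSet facts for σ'
  have hb1 : ∀ S : Finset (Fin n), c ∈ S → bestSet σ' S = {c} :=
    bestSet_of_top h0 σ' c hσ'c
  have hb2 : ∀ S : Finset (Fin n), c ∉ S → bestSet σ' S = bestSet σ₀ S := by
    intro S hcS
    refine (bestSet_congr σ₀ σ' S fun x hx y hy => ?_).symm
    rw [hsymm, hsymm]
    have hxc : x ≠ c := fun h => hcS (h ▸ hx)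
    have hyc : y ≠ c := fun h => hcS (h ▸ hy)
    exact (promoteFun_le_iff p _ _
      (fun h => hxc (σ₀.symm.injective (h.trans hp)))
      (fun h => hyc (σ₀.symm.injective (h.trans hp)))).symm
  -- decomposition for voters ranking c first
  have hdec : ∀ v : Equiv.Perm (Fin n), v ⟨0, h0⟩ = c →
      dTD n β μ σ₀ v = dTD n β μ σ₀ σ' + dTD n β μ σ' v := by
    intro v hv
    have hvc : v.symm c = ⟨0, h0⟩ := by rw [← hv, Equiv.symm_apply_apply]
    have hb3 := bestSet_of_top h0 v c hvc
    unfold dTD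
    rw [← Finset.sum_add_distrib]
    refine Finset.sum_congr rfl fun S hS => ?_
    rw [← mul_add]
    congr 1
    by_cases hcS : c ∈ S
    · rw [topDiff, topDiff, topDiff, hb1 S hcS, hb3 S hcS, symmDiff_self]
      simp
    · rw [topDiff, topDiff, topDiff, hb2 S hcS, symmDiff_self]
      simp
  set D := dTD n β μ σ₀ σ' with hD
  have hDpos : 0 ≤ D := hd.1 _ _
  have htri : ∀ v, dTD n β μ σ' v ≤ dTD n β μ σ₀ v + D := by
    intro v
    have h1 := hd.2.2.2 σ' σ₀ v
    have h2 := hd.2.1 σ' σ₀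
    rw [hD]
    linarith
  set P : Equiv.Perm (Fin n) → Bool := fun v => decide (v ⟨0, h0⟩ = c) with hP
  have key : ∀ W : List (Equiv.Perm (Fin n)),
      dProf n β μ σ' W + (W.countP P : ℝ) * D ≤
        dProf n β μ σ₀ W + ((W.length : ℝ) - (W.countP P : ℝ)) * D := by
    intro W
    induction W with
    | nil => simp [dProf]
    | cons v W ih =>
      simp only [dProf, List.map_cons, List.sum_cons, List.countP_cons,
        List.length_cons] at *
      by_cases hv : P v = true
      · have hvc : v ⟨0, h0⟩ = c := of_decide_eq_true hv
        have h1 := hdec v hvc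
        simp only [hv, if_true]
        push_cast
        linarith
      · simp only [hv, if_false]
        have h1 := htri v
        push_cast
        linarith
  have hmaj' : 0 ≤ ((V.countP P : ℤ)) - ((V.length : ℤ) - (V.countP P : ℤ)) := hmaj
  have final : dProf n β μ σ' V ≤ dProf n β μ σ₀ V := by
    have hk := key V
    have h2 : ((V.length : ℝ) - (V.countP P : ℝ)) * D ≤ (V.countP P : ℝ) * D := by
      apply mul_le_mul_of_nonneg_right _ hDpos
      have h3 : ((V.countP P : ℝ)) - ((V.length : ℝ) - (V.countP P : ℝ)) ≥ 0 := by
        exact_mod_cast hmaj'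
      linarith
    linarith
  exact ⟨σ', fun τ => le_trans final (hmin τ (Finset.mem_univ τ)),
    by rw [← hσ'c, Equiv.apply_symm_apply]⟩
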